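/- Let $\mu$ be a probability measure on a compact space $K$, let $\phi, v$ be bounded measurable real functions on $K$, and for each $t \in \mathbb{R}$ consider on a fixed $N$-dimensional space $V$ of bounded measurable complex functions the Hermitian inner products $\langle f, g \rangle_t = \int_K f \bar{g}\, e^{-2(\phi + t v)} d\mu$. Fix an orthonormal basis $(s_j)$ of $V$ for $\langle \cdot,\cdot \rangle_0$ and let $H(t)$ be the Gram matrix $H(t)_{ij} = \langle s_i, s_j \rangle_t$. Then $\frac{d}{dt}\Big|_{t=0} \log \det H(t) = -2 \int_K v \, \rho \, d\mu$, where $\rho(x) = \sum_j |s_j(x)|^2 e^{-2\phi(x)}$. -/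

import Mathlib

open MeasureTheory

lemma det_hasDerivAt_one {n : ℕ} {H : ℝ → Matrix (Fin n) (Fin n) ℂ}
    {D : Matrix (Fin n) (Fin n) ℂ}
    (hH : ∀ i j, HasDerivAt (fun t => H t i j) (D i j) 0) (h0 : H 0 = 1) :
    HasDerivAt (fun t => (H t).det) D.trace 0 := by
  have key : HasDerivAt
      (fun t => ∑ σ : Equiv.Perm (Fin n), (Equiv.Perm.sign σ : ℤ) •
        ∏ i, H t (σ i) i)
      (∑ σ : Equiv.Perm (Fin n), (Equiv.Perm.sign σ : ℤ) •
        ∑ i, (∏ j ∈ Finset.univ.erase i, H 0 (σ j) j) • D (σ i) i) 0 := by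
    refine HasDerivAt.fun_sum fun σ _ => ?_
    exact (HasDerivAt.fun_finsetProd fun i _ => hH (σ i) i).const_smul _
  have e1 : (fun t => (H t).det)
      = fun t => ∑ σ : Equiv.Perm (Fin n), (Equiv.Perm.sign σ : ℤ) •
        ∏ i, H t (σ i) i := by
    funext t; rw [Matrix.det_apply]; simp [Units.smul_def]
  rw [e1]
  convert key using 1
  rw [Finset.sum_eq_single_of_mem (1 : Equiv.Perm (Fin n)) (Finset.mem_univ _)]
  · simp [Matrix.trace, Matrix.diag, h0, Matrix.one_apply]
  · intro σ _ hσ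
    obtain ⟨k, hk⟩ : ∃ k, σ k ≠ k := by
      by_contra h
      push_neg at h
      exact hσ (Equiv.ext h)
    have : ∀ i, (∏ j ∈ Finset.univ.erase i, H 0 (σ j) j) = 0 := by
      intro i
      rcases eq_or_ne k i with rfl | hne
      · refine Finset.prod_eq_zero (Finset.mem_erase.2 ⟨hk, Finset.mem_univ _⟩) ?_
        have : σ (σ k) ≠ σ k := fun h => hk (σ.injective h)
        simp [h0, Matrix.one_apply, this]
      · refine Finset.prod_eq_zero (Finset.mem_erase.2 ⟨hne, Finset.mem_univ _⟩) ?_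
        simp [h0, Matrix.one_apply, hk]
    simp [this]

/-- Derivative of the log-determinant of the Gram matrix of a fixed `L²(e^{-2φ}dμ)`-orthonormal
family with respect to a perturbation `φ + t·v` of the weight:
`d/dt|₀ log det H(t) = -2 ∫ v ρ dμ`, where `H(t)ᵢⱼ = ∫ sᵢ s̄ⱼ e^{-2(φ+tv)} dμ` and
`ρ(x) = ∑ⱼ |sⱼ(x)|² e^{-2φ(x)}`. -/
theorem stmt_18 {K : Type*} [MeasurableSpace K] (μ : Measure K) [IsProbabilityMeasure μ]
    (φ v : K → ℝ) (hφm : Measurable φ) (hvm : Measurable v)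
    (hφb : ∃ A : ℝ, ∀ x, |φ x| ≤ A) (hvb : ∃ A : ℝ, ∀ x, |v x| ≤ A)
    (N : ℕ) (s : Fin N → K → ℂ)
    (hsm : ∀ i, Measurable (s i)) (hsb : ∀ i, ∃ A : ℝ, ∀ x, ‖s i x‖ ≤ A)
    (hON : ∀ i j, (∫ a, s i a * (starRingEnd ℂ) (s j a) *
        Complex.ofReal (Real.exp (-2 * φ a)) ∂μ) = if i = j then 1 else 0) :
    HasDerivAt (fun t : ℝ => Real.log
        (Matrix.det (Matrix.of fun i j : Fin N => ∫ a, s i a * (starRingEnd ℂ) (s j a) *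
          Complex.ofReal (Real.exp (-2 * (φ a + t * v a))) ∂μ)).re)
      (-2 * ∫ a, v a * ((∑ j, ‖s j a‖ ^ 2) * Real.exp (-2 * φ a)) ∂μ) 0 := by
  obtain ⟨Aφ, hAφ⟩ := hφb
  obtain ⟨Av, hAv⟩ := hvb
  choose As hAs using hsb
  set Bφ : ℝ := |Aφ| with hBφ
  set Bv : ℝ := |Av| with hBv
  have hBφ' : ∀ x, |φ x| ≤ Bφ := fun x => (hAφ x).trans (le_abs_self _)
  have hBv' : ∀ x, |v x| ≤ Bv := fun x => (hAv x).trans (le_abs_self _)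
  have hBs : ∀ i x, ‖s i x‖ ≤ |As i| := fun i x => (hAs i x).trans (le_abs_self _)
  -- the matrix family and its derivative
  set G : ℝ → Matrix (Fin N) (Fin N) ℂ := fun t => Matrix.of fun i j =>
    ∫ a, s i a * (starRingEnd ℂ) (s j a) *
      Complex.ofReal (Real.exp (-2 * (φ a + t * v a))) ∂μ with hG
  set D : Matrix (Fin N) (Fin N) ℂ := Matrix.of fun i j =>
    ∫ a, s i a * (starRingEnd ℂ) (s j a) *
      Complex.ofReal (Real.exp (-2 * (φ a + 0 * v a)) * (-2 * v a)) ∂μ with hD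
  -- measurability helpers
  have measF : ∀ (i j : Fin N) (g : K → ℝ), Measurable g →
      Measurable (fun a => s i a * (starRingEnd ℂ) (s j a) * Complex.ofReal (g a)) := by
    intro i j g hg
    exact ((hsm i).mul (Complex.continuous_conj.measurable.comp (hsm j))).mul
      (Complex.measurable_ofReal.comp hg)
  have measexp : ∀ t : ℝ, Measurable fun a => Real.exp (-2 * (φ a + t * v a)) := by
    intro t
    exact Real.measurable_exp.comp ((measurable_const.mul (hφm.add (measurable_const.mul hvm))))
  -- entrywise derivatives
  have hEntry : ∀ i j, HasDerivAt (fun t => G t i j) (D i j) 0 := by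
    intro i j
    have main := hasDerivAt_integral_of_dominated_loc_of_deriv_le (μ := μ)
      (F := fun t a => s i a * (starRingEnd ℂ) (s j a) *
        Complex.ofReal (Real.exp (-2 * (φ a + t * v a))))
      (F' := fun t a => s i a * (starRingEnd ℂ) (s j a) *
        Complex.ofReal (Real.exp (-2 * (φ a + t * v a)) * (-2 * v a)))
      (bound := fun _ => |As i| * |As j| * (Real.exp (2 * Bφ + 2 * Bv) * (2 * Bv)))
      (x₀ := 0) (Metric.ball_mem_nhds 0 one_pos) ?_ ?_ ?_ ?_ ?_ ?_
    · exact main.2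
    · exact Filter.Eventually.of_forall fun t =>
        ((measF i j _ (measexp t))).aestronglyMeasurable
    · refine (integrable_const (|As i| * |As j| * Real.exp (2 * Bφ + 2 * Bv))).mono'
        ((measF i j _ (measexp 0))).aestronglyMeasurable (ae_of_all _ fun a => ?_)
      rw [norm_mul, norm_mul]
      have h1 : ‖s i a‖ ≤ |As i| := hBs i a
      have h2 : ‖(starRingEnd ℂ) (s j a)‖ ≤ |As j| := by
        rw [RCLike.norm_conj]; exact hBs j a
      have h3 : ‖(Complex.ofReal (Real.exp (-2 * (φ a + 0 * v a))))‖
          ≤ Real.exp (2 * Bφ + 2 * Bv) := by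
        rw [Complex.norm_real, Real.norm_eq_abs, Real.abs_exp, Real.exp_le_exp]
        have := abs_le.1 (hBφ' a)
        have hb := abs_le.1 (hBv' a)
        nlinarith [Real.exp_pos Bφ]
      exact mul_le_mul (mul_le_mul h1 h2 (norm_nonneg _) (abs_nonneg _)) h3
        (norm_nonneg _) (by positivity)
    · exact ((measF i j _ ((measexp 0).mul (measurable_const.mul hvm)))).aestronglyMeasurable
    · refine ae_of_all _ fun a t ht => ?_
      rw [norm_mul, norm_mul]
      have h1 : ‖s i a‖ ≤ |As i| := hBs i a
      have h2 : ‖(starRingEnd ℂ) (s j a)‖ ≤ |As j| := by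
        rw [RCLike.norm_conj]; exact hBs j a
      have htlt : |t| ≤ 1 := le_of_lt (by simpa [Real.dist_eq] using Metric.mem_ball.1 ht)
      have hBv0 : (0:ℝ) ≤ Bv := abs_nonneg _
      have h3 : ‖(Complex.ofReal (Real.exp (-2 * (φ a + t * v a)) * (-2 * v a)))‖
          ≤ Real.exp (2 * Bφ + 2 * Bv) * (2 * Bv) := by
        rw [Complex.norm_real, Real.norm_eq_abs, abs_mul, Real.abs_exp]
        have hφa := abs_le.1 (hBφ' a)
        have hva := abs_le.1 (hBv' a)
        have htv : |t * v a| ≤ Bv := by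
          rw [abs_mul]
          calc |t| * |v a| ≤ 1 * Bv := by
                apply mul_le_mul htlt (hBv' a) (abs_nonneg _) zero_le_one
            _ = Bv := one_mul _
        have htv' := abs_le.1 htv
        have hexp : Real.exp (-2 * (φ a + t * v a)) ≤ Real.exp (2 * Bφ + 2 * Bv) := by
          rw [Real.exp_le_exp]; nlinarith
        have habs : |(-2 : ℝ) * v a| ≤ 2 * Bv := by
          rw [abs_mul]
          simp only [abs_neg, abs_two]
          linarith [hBv' a]
        exact mul_le_mul hexp habs (abs_nonneg _) (Real.exp_pos _).le
      exact mul_le_mul (mul_le_mul h1 h2 (norm_nonneg _) (abs_nonneg _)) h3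
        (norm_nonneg _) (by positivity)
    · exact integrable_const _
    · refine ae_of_all _ fun a t _ => ?_
      have hlin : HasDerivAt (fun t : ℝ => -2 * (φ a + t * v a)) (-2 * v a) t := by
        have h1 : HasDerivAt (fun t : ℝ => φ a + t * v a) (v a) t :=
          (hasDerivAt_mul_const (v a)).const_add (φ a)
        simpa using h1.const_mul (-2 : ℝ)
      have hexp : HasDerivAt (fun t : ℝ => Real.exp (-2 * (φ a + t * v a)))
          (Real.exp (-2 * (φ a + t * v a)) * (-2 * v a)) t := hlin.exp
      have hofr := hexp.ofReal_comp
      exact hofr.const_mul (s i a * (starRingEnd ℂ) (s j a))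
  -- G 0 = 1
  have hG0 : G 0 = 1 := by
    ext i j
    have := hON i j
    simp only [hG, Matrix.of_apply, zero_mul, add_zero, Matrix.one_apply]
    rw [← this]
  -- derivative of det
  have hdet : HasDerivAt (fun t => (G t).det) D.trace 0 := det_hasDerivAt_one hEntry hG0
  -- derivative of re ∘ det
  have hre : HasDerivAt (fun t => ((G t).det).re) D.trace.re 0 :=
    (Complex.reCLM.hasFDerivAt.comp_hasDerivAt 0 hdet)
  -- log
  have hdet0 : ((G 0).det).re = 1 := by rw [hG0, Matrix.det_one]; simp
  have hlog := hre.log (by rw [hdet0]; norm_num)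
  rw [hdet0, div_one] at hlog
  -- identify the derivative value
  have hval : D.trace.re = -2 * ∫ a, v a * ((∑ j, ‖s j a‖ ^ 2) * Real.exp (-2 * φ a)) ∂μ := by
    have hDiag : ∀ i : Fin N, D i i = Complex.ofReal
        (∫ a, ‖s i a‖ ^ 2 * (Real.exp (-2 * (φ a + 0 * v a)) * (-2 * v a)) ∂μ) := by
      intro i
      rw [hD]
      simp only [Matrix.of_apply]
      rw [show Complex.ofReal (∫ a, ‖s i a‖ ^ 2 *
            (Real.exp (-2 * (φ a + 0 * v a)) * (-2 * v a)) ∂μ)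
          = ∫ a, Complex.ofReal (‖s i a‖ ^ 2 *
            (Real.exp (-2 * (φ a + 0 * v a)) * (-2 * v a))) ∂μ from integral_ofReal.symm]
      congr 1
      funext a
      rw [Complex.mul_conj']
      push_cast
      ring
    have hint : ∀ i : Fin N, Integrable
        (fun a => ‖s i a‖ ^ 2 * (Real.exp (-2 * (φ a + 0 * v a)) * (-2 * v a))) μ := by
      intro i
      refine (integrable_const (|As i| ^ 2 * (Real.exp (2 * Bφ) * (2 * Bv)))).mono'
        ?_ (ae_of_all _ fun a => ?_)
      · exact (((hsm i).norm.pow_const 2).mul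
          ((measexp 0).mul (measurable_const.mul hvm))).aestronglyMeasurable
      · rw [Real.norm_eq_abs, abs_mul, abs_mul]
        have h1 : |‖s i a‖ ^ 2| ≤ |As i| ^ 2 := by
          rw [abs_of_nonneg (by positivity)]
          exact pow_le_pow_left₀ (norm_nonneg _) (hBs i a) 2
        have h2 : |Real.exp (-2 * (φ a + 0 * v a))| ≤ Real.exp (2 * Bφ) := by
          rw [Real.abs_exp, Real.exp_le_exp]
          have := abs_le.1 (hBφ' a)
          nlinarith
        have h3 : |(-2 : ℝ) * v a| ≤ 2 * Bv := by
          rw [abs_mul]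
          simp only [abs_neg, abs_two]
          linarith [hBv' a]
        have := mul_le_mul h2 h3 (abs_nonneg _) (Real.exp_pos _).le
        exact mul_le_mul h1 this (by positivity) (by positivity)
    have htr : D.trace = Complex.ofReal
        (∫ a, ∑ i, ‖s i a‖ ^ 2 * (Real.exp (-2 * (φ a + 0 * v a)) * (-2 * v a)) ∂μ) := by
      rw [Matrix.trace]
      rw [integral_finset_sum _ fun i _ => hint i]
      push_cast
      exact Finset.sum_congr rfl fun i _ => hDiag i
    rw [htr, Complex.ofReal_re]
    rw [show (fun a => ∑ i, ‖s i a‖ ^ 2 * (Real.exp (-2 * (φ a + 0 * v a)) * (-2 * v a)))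
        = fun a => (-2 : ℝ) * (v a * ((∑ j, ‖s j a‖ ^ 2) * Real.exp (-2 * φ a))) by
      funext a
      rw [← Finset.sum_mul]
      simp only [zero_mul, add_zero]
      ring]
    rw [integral_const_mul]
  rw [← hval]
  convert hlog using 2
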